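/- Let R = K⟨x,y⟩/(xy−1) and let H = Σ ⊕ Rp(x) be a left ideal with p(x) ≠ 0 a polynomial in x and Σ ⊆ I semisimple. Then H is finitely generated and Σ has finite length. -/

import Mathlib

noncomputable section

/-- The defining relation of the Toeplitz/Jacobson algebra: `x * y = 1`. -/
inductive ToeplitzRel (K : Type*) [Field K] :
    FreeAlgebra K (Fin 2) → FreeAlgebra K (Fin 2) → Prop
  | rel : ToeplitzRel K (FreeAlgebra.ι K 0 * FreeAlgebra.ι K 1) 1

/-- The Toeplitz/Jacobson algebra `R = K⟨x,y⟩/(xy-1)`. -/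
abbrev Toeplitz (K : Type*) [Field K] := RingQuot (ToeplitzRel K)

variable (K : Type*) [Field K]

/-- The image of the generator `x` in `R`. -/
def tx : Toeplitz K := RingQuot.mkAlgHom K (ToeplitzRel K) (FreeAlgebra.ι K 0)

/-- The image of the generator `y` in `R`. -/
def ty : Toeplitz K := RingQuot.mkAlgHom K (ToeplitzRel K) (FreeAlgebra.ι K 1)

/-- `f n = y^(n-1) x^(n-1) - y^n x^n`. -/
def tf (n : ℕ) : Toeplitz K := ty K ^ (n-1) * tx K ^ (n-1) - ty K ^ n * tx K ^ n

set_option maxHeartbeats 1000000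

namespace TP

open Polynomial Submodule

def divXL : Module.End K (Polynomial K) where
  toFun := Polynomial.divX
  map_add' _ _ := Polynomial.divX_add
  map_smul' c q := by ext n; simp [Polynomial.coeff_divX]

def mulXL : Module.End K (Polynomial K) where
  toFun q := X * q
  map_add' p q := by ring
  map_smul' c q := by simp [Algebra.mul_smul_comm]

lemma divXL_mulXL : divXL K * mulXL K = 1 := by
  apply LinearMap.ext
  intro q
  rw [Module.End.mul_apply]
  show Polynomial.divX ((mulXL K) q) = q
  rw [show (mulXL K) q = X * q from rfl]
  ext n
  rw [Polynomial.coeff_divX, Polynomial.coeff_X_mul]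

/-- The representation of the Toeplitz algebra on `K[X]`. -/
def pirep : Toeplitz K →ₐ[K] Module.End K (Polynomial K) :=
  RingQuot.liftAlgHom K ⟨FreeAlgebra.lift K ![divXL K, mulXL K], by
    rintro _ _ ⟨⟩
    simp only [map_mul, map_one, FreeAlgebra.lift_ι_apply]
    exact divXL_mulXL K⟩

lemma pirep_tx : pirep K (tx K) = divXL K := by
  rw [tx, pirep, RingQuot.liftAlgHom_mkAlgHom_apply, FreeAlgebra.lift_ι_apply]
  rfl

lemma xy : tx K * ty K = 1 := by
  have h := RingQuot.mkAlgHom_rel K (ToeplitzRel.rel (K := K))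
  rw [map_mul, map_one] at h
  exact h

/-- `e = 1 - y x`, the basic idempotent. -/
def e : Toeplitz K := 1 - ty K * tx K

lemma x_mul_e : tx K * e K = 0 := by
  rw [e, mul_sub, mul_one, ← mul_assoc, xy, one_mul, sub_self]

lemma pow_xy (b c : ℕ) : tx K ^ b * ty K ^ c = ty K ^ (c - b) * tx K ^ (b - c) := by
  induction b generalizing c with
  | zero => simp
  | succ b ih =>
      rw [pow_succ, mul_assoc]
      cases c with
      | zero => simp [pow_succ]
      | succ m =>
          rw [pow_succ' (ty K), ← mul_assoc (tx K), xy, one_mul, ih m,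
            Nat.succ_sub_succ, Nat.succ_sub_succ]

lemma one_notin_span_x : (1 : Toeplitz K) ∉ Submodule.span (Toeplitz K) {tx K} := by
  intro h
  rw [Submodule.mem_span_singleton] at h
  obtain ⟨s, hs⟩ := h
  have h2 : pirep K s * pirep K (tx K) = 1 := by
    rw [← map_mul, ← map_one (pirep K)]
    exact congrArg _ (by rw [smul_eq_mul] at hs; exact hs)
  have h3 := congrArg (fun f : Module.End K (Polynomial K) => f (1 : Polynomial K)) h2
  simp only [Module.End.mul_apply, pirep_tx, Module.End.one_apply] at h3
  rw [show (divXL K) (1 : Polynomial K) = 0 from Polynomial.divX_one, map_zero] at h3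
  exact one_ne_zero h3.symm


section Spanning

/-- The `K`-span of the monomials `y^a x^b`. -/
def A : Submodule K (Toeplitz K) :=
  Submodule.span K (Set.range fun ab : ℕ × ℕ => ty K ^ ab.1 * tx K ^ ab.2)

lemma mono_mem (a b : ℕ) : ty K ^ a * tx K ^ b ∈ A K :=
  Submodule.subset_span ⟨(a, b), rfl⟩

lemma mono_mul_mono (a b c d : ℕ) :
    ty K ^ a * tx K ^ b * (ty K ^ c * tx K ^ d)
      = ty K ^ (a + (c - b)) * tx K ^ (b - c + d) := by
  rw [mul_assoc, ← mul_assoc (tx K ^ b), pow_xy, mul_assoc, ← pow_add,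
    ← mul_assoc, ← pow_add]

lemma mul_mem_A {u v : Toeplitz K} (hu : u ∈ A K) (hv : v ∈ A K) : u * v ∈ A K := by
  have h := Submodule.mul_mem_mul hu hv
  rw [A, Submodule.span_mul_span] at h
  refine Submodule.span_le.mpr ?_ h
  rintro w ⟨_, ⟨⟨a, b⟩, rfl⟩, _, ⟨⟨c, d⟩, rfl⟩, rfl⟩
  show ty K ^ a * tx K ^ b * (ty K ^ c * tx K ^ d) ∈ A K
  rw [mono_mul_mono]
  exact mono_mem K _ _

lemma mem_A (r : Toeplitz K) : r ∈ A K := by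
  obtain ⟨f, rfl⟩ := RingQuot.mkAlgHom_surjective K (ToeplitzRel K) r
  induction f using FreeAlgebra.induction with
  | grade0 c =>
      rw [AlgHom.commutes, Algebra.algebraMap_eq_smul_one]
      exact Submodule.smul_mem _ _ (by simpa using mono_mem K 0 0)
  | grade1 i =>
      fin_cases i
      · exact (by simpa using mono_mem K 0 1 : tx K ∈ A K)
      · exact (by simpa using mono_mem K 1 0 : ty K ∈ A K)
  | mul a b ha hb => rw [map_mul]; exact mul_mem_A K ha hb
  | add a b ha hb => rw [map_add]; exact add_mem ha hb

end Spanning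

section Simple

/-- The left ideal `Rx`. -/
def Vx : Submodule (Toeplitz K) (Toeplitz K) := Submodule.span (Toeplitz K) {tx K}

lemma mem_Vx (a b : ℕ) (hb : 0 < b) : ty K ^ a * tx K ^ b ∈ Vx K := by
  rw [Vx, Submodule.mem_span_singleton]
  exact ⟨ty K ^ a * tx K ^ (b - 1), by
    rw [smul_eq_mul, mul_assoc, ← pow_succ, Nat.sub_add_cancel hb]⟩

lemma mk_one_ne_zero :
    (Submodule.Quotient.mk (1 : Toeplitz K) : Toeplitz K ⧸ Vx K) ≠ 0 := by
  rw [Ne, Submodule.Quotient.mk_eq_zero]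
  exact one_notin_span_x K

lemma simpleVx : IsSimpleModule (Toeplitz K) (Toeplitz K ⧸ Vx K) := by
  haveI : Nontrivial (Toeplitz K ⧸ Vx K) := nontrivial_of_ne (Submodule.Quotient.mk (1 : Toeplitz K)) 0 (mk_one_ne_zero K)
  haveI : Nontrivial (Submodule (Toeplitz K) (Toeplitz K ⧸ Vx K)) :=
    nontrivial_of_ne ⊥ ⊤ (by
      intro h
      exact mk_one_ne_zero K (by
        have : (Submodule.Quotient.mk (1 : Toeplitz K) : Toeplitz K ⧸ Vx K) ∈ (⊤ : Submodule (Toeplitz K) (Toeplitz K ⧸ Vx K)) := trivial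
        rw [← h, Submodule.mem_bot] at this
        exact this))
  rw [isSimpleModule_iff]
  constructor
  intro W
  rcases eq_or_ne W ⊥ with h | h
  · exact Or.inl h
  refine Or.inr ?_
  obtain ⟨v, hvW, hv0⟩ := (Submodule.ne_bot_iff W).mp h
  -- `v` lies in the `K`-span of the `mk (y^a)`.
  have hvA : v ∈ Submodule.span K
      (Set.range fun a : ℕ => (Submodule.Quotient.mk (ty K ^ a) : Toeplitz K ⧸ Vx K)) := by
    obtain ⟨r, rfl⟩ := Submodule.Quotient.mk_surjective (Vx K) v
    refine Submodule.span_induction ?_ ?_ ?_ ?_ (mem_A K r)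
    · rintro _ ⟨⟨a, b⟩, rfl⟩
      rcases Nat.eq_zero_or_pos b with hb | hb
      · subst hb
        show Submodule.Quotient.mk (ty K ^ a * tx K ^ 0) ∈ _
        rw [pow_zero, mul_one]
        exact Submodule.subset_span ⟨a, rfl⟩
      · rw [show (Submodule.Quotient.mk (ty K ^ a * tx K ^ b) : Toeplitz K ⧸ Vx K) = 0 from
          (Submodule.Quotient.mk_eq_zero _).mpr (mem_Vx K a b hb)]
        exact Submodule.zero_mem _
    · rw [Submodule.Quotient.mk_zero]
      exact Submodule.zero_mem _
    · intro u w _ _ hu hw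
      rw [Submodule.Quotient.mk_add]
      exact Submodule.add_mem _ hu hw
    · intro k u _ hu
      rw [Submodule.Quotient.mk_smul]
      exact Submodule.smul_mem _ _ hu
  rw [Finsupp.mem_span_range_iff_exists_finsupp] at hvA
  obtain ⟨c, hc⟩ := hvA
  have hcne : c ≠ 0 := by
    rintro rfl
    rw [Finsupp.sum_zero_index] at hc
    exact hv0 hc.symm
  set Am := c.support.max' (Finsupp.support_nonempty_iff.mpr hcne) with hAm
  have hkey : tx K ^ Am • v = c Am • (Submodule.Quotient.mk (1 : Toeplitz K) : Toeplitz K ⧸ Vx K) := by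
    rw [← hc, Finsupp.sum, Finset.smul_sum]
    rw [Finset.sum_eq_single Am]
    · rw [smul_comm, ← Submodule.Quotient.mk_smul, smul_eq_mul, pow_xy]
      simp
    · intro a ha hne
      have hlt : a < Am := lt_of_le_of_ne (Finset.le_max' _ _ ha) hne
      rw [smul_comm, ← Submodule.Quotient.mk_smul, smul_eq_mul, pow_xy,
        Nat.sub_eq_zero_of_le hlt.le, pow_zero, one_mul]
      rw [show (Submodule.Quotient.mk (tx K ^ (Am - a)) : Toeplitz K ⧸ Vx K) = 0 from
        (Submodule.Quotient.mk_eq_zero _).mpr (by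
          simpa using mem_Vx K 0 (Am - a) (Nat.sub_pos_of_lt hlt))]
      rw [smul_zero]
    · intro hAm'
      exact absurd (c.support.max'_mem _) hAm'
  have hcAm : c Am ≠ 0 := Finsupp.mem_support_iff.mp (c.support.max'_mem _)
  have hone : (Submodule.Quotient.mk (1 : Toeplitz K) : Toeplitz K ⧸ Vx K) ∈ W := by
    have h1 : tx K ^ Am • v ∈ W := W.smul_mem _ hvW
    rw [hkey] at h1
    have h2 := W.smul_of_tower_mem (c Am)⁻¹ h1
    have h3 := inv_smul_smul₀ hcAm
      ((Submodule.Quotient.mk (1 : Toeplitz K) : Toeplitz K ⧸ Vx K))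
    rw [← h3]
    exact h2
  rw [eq_top_iff]
  intro z _
  obtain ⟨r, rfl⟩ := Submodule.Quotient.mk_surjective (Vx K) z
  have : (r : Toeplitz K) • (Submodule.Quotient.mk (1 : Toeplitz K) : Toeplitz K ⧸ Vx K)
      = Submodule.Quotient.mk r := by
    rw [← Submodule.Quotient.mk_smul, smul_eq_mul, mul_one]
  rw [← this]
  exact W.smul_mem r hone

end Simple


section Main

open Polynomial

variable (p : Polynomial K)

/-- The left ideal `R p(x)`. -/
def Pmod : Submodule (Toeplitz K) (Toeplitz K) :=
  Submodule.span (Toeplitz K) {Polynomial.aeval (tx K) p}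

/-- The left ideal generated by `e x^j`, `j < deg p`. -/
def Emod : Submodule (Toeplitz K) (Toeplitz K) :=
  Submodule.span (Toeplitz K) ((fun j => e K * tx K ^ j) '' Set.Iio p.natDegree)

def Lmod : Submodule (Toeplitz K) (Toeplitz K) := Pmod K p ⊔ Emod K p

variable {p}

lemma exj_mem (hp : p ≠ 0) (m : ℕ) : e K * tx K ^ m ∈ Lmod K p := by
  induction m using Nat.strong_induction_on with
  | _ m ih =>
    rcases lt_or_ge m p.natDegree with hm | hm
    · exact Submodule.mem_sup_right (Submodule.subset_span ⟨m, hm, rfl⟩)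
    · set d := p.natDegree with hd
      have key : (e K * tx K ^ (m - d)) • (Polynomial.aeval (tx K) p) ∈ Lmod K p :=
        Submodule.mem_sup_left
          (Submodule.smul_mem _ _ (Submodule.mem_span_singleton_self _))
      rw [smul_eq_mul, Polynomial.aeval_eq_sum_range, Finset.mul_sum] at key
      have hterm : ∀ i, e K * tx K ^ (m - d) * (p.coeff i • tx K ^ i)
          = p.coeff i • (e K * tx K ^ (m - d + i)) := by
        intro i; rw [mul_smul_comm, mul_assoc, ← pow_add]
      simp only [hterm] at key
      rw [Finset.sum_range_succ, Nat.sub_add_cancel hm] at key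
      have hsum : ∑ i ∈ Finset.range d, p.coeff i • (e K * tx K ^ (m - d + i))
          ∈ Lmod K p :=
        Submodule.sum_mem _ fun i hi => Submodule.smul_of_tower_mem _ _
          (ih _ (by
            have : i < d := Finset.mem_range.mp hi
            omega))
      have h2 : p.coeff d • (e K * tx K ^ m) ∈ Lmod K p := by
        have h3 := Submodule.sub_mem _ key hsum
        rwa [add_sub_cancel_left] at h3
      have hc : p.coeff d ≠ 0 := by
        rw [hd, ← Polynomial.leadingCoeff]
        exact Polynomial.leadingCoeff_ne_zero.mpr hp
      have h4 := Submodule.smul_of_tower_mem (Lmod K p) (p.coeff d)⁻¹ h2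
      rwa [inv_smul_smul₀ hc] at h4

lemma e_aeval_mem (hp : p ≠ 0) (f : Polynomial K) :
    e K * Polynomial.aeval (tx K) f ∈ Lmod K p := by
  rw [Polynomial.aeval_eq_sum_range, Finset.mul_sum]
  refine Submodule.sum_mem _ fun i _ => ?_
  rw [mul_smul_comm]
  exact Submodule.smul_of_tower_mem _ _ (exj_mem K hp i)

lemma yx_eq : ty K * tx K = 1 - e K := by rw [e, sub_sub_cancel]

lemma one_sub_mem (hp : p ≠ 0) (k : ℕ) (f : Polynomial K) :
    (1 - ty K ^ k * tx K ^ k) * Polynomial.aeval (tx K) f ∈ Lmod K p := by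
  induction k with
  | zero => simp
  | succ k ih =>
      have h5 : ty K ^ k * (e K * tx K ^ k)
          = ty K ^ k * tx K ^ k - ty K ^ (k + 1) * tx K ^ (k + 1) := by
        rw [e, sub_mul, one_mul, mul_sub]
        congr 1
        rw [pow_succ (ty K), pow_succ' (tx K)]
        rw [mul_assoc (ty K) (tx K) (tx K ^ k)]
        rw [← mul_assoc (ty K ^ k) (ty K) (tx K * tx K ^ k)]
      have hid : 1 - ty K ^ (k + 1) * tx K ^ (k + 1)
          = (1 - ty K ^ k * tx K ^ k) + ty K ^ k * (e K * tx K ^ k) := by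
        rw [h5]
        abel
      rw [hid, add_mul]
      refine Submodule.add_mem _ (ih) ?_
      rw [mul_assoc, mul_assoc]
      rw [show tx K ^ k * Polynomial.aeval (tx K) f
          = Polynomial.aeval (tx K) (X ^ k * f) by
        rw [map_mul, map_pow, Polynomial.aeval_X]]
      exact Submodule.smul_mem _ (ty K ^ k) (e_aeval_mem K hp _)


variable (p) in
def Winf : Submodule K (Toeplitz K) :=
  (Lmod K p).restrictScalars K ⊔ Submodule.span K (Set.range fun b : ℕ => tx K ^ b)

lemma L_mem_Winf {u : Toeplitz K} (hu : u ∈ Lmod K p) : u ∈ Winf K p :=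
  Submodule.mem_sup_left hu

lemma xpow_mem_Winf (b : ℕ) : tx K ^ b ∈ Winf K p :=
  Submodule.mem_sup_right (Submodule.subset_span ⟨b, rfl⟩)

lemma aeval_mem_span_xpow (f : Polynomial K) :
    Polynomial.aeval (tx K) f ∈ Submodule.span K (Set.range fun b : ℕ => tx K ^ b) := by
  rw [Polynomial.aeval_eq_sum_range]
  exact Submodule.sum_mem _ fun i _ =>
    Submodule.smul_mem _ _ (Submodule.subset_span ⟨i, rfl⟩)

lemma y_mem_Winf (hp : p ≠ 0) : ty K ∈ Winf K p := by
  obtain ⟨q, hpq, hqnd⟩ := p.exists_eq_pow_rootMultiplicity_mul_and_not_dvd hp 0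
  rw [Polynomial.C_0, sub_zero] at hpq hqnd
  have hc : q.coeff 0 ≠ 0 := fun h => hqnd (Polynomial.X_dvd_iff.mpr h)
  set k := p.rootMultiplicity 0 with hk
  -- `aeval q ∈ L`
  have haq : Polynomial.aeval (tx K) q ∈ Lmod K p := by
    have h1 := one_sub_mem K hp k q
    have h2 : ty K ^ k • Polynomial.aeval (tx K) p ∈ Lmod K p :=
      Submodule.smul_mem _ _ (Submodule.mem_sup_left (Submodule.mem_span_singleton_self _))
    have h3 : Polynomial.aeval (tx K) q
        = (1 - ty K ^ k * tx K ^ k) * Polynomial.aeval (tx K) q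
          + ty K ^ k • Polynomial.aeval (tx K) p := by
      rw [smul_eq_mul, hpq, map_mul, map_pow, Polynomial.aeval_X,
        sub_mul, one_mul, mul_assoc (ty K ^ k)]
      abel
    rw [h3]
    exact Submodule.add_mem _ h1 h2
  -- write `q = C c + X * divX q`
  have hq0 : q = Polynomial.C (q.coeff 0) + Polynomial.X * q.divX := by
    rw [mul_comm, add_comm]
    exact (Polynomial.divX_mul_X_add q).symm
  have haq2 : Polynomial.aeval (tx K) q
      = algebraMap K (Toeplitz K) (q.coeff 0) + tx K * Polynomial.aeval (tx K) q.divX := by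
    conv_lhs => rw [hq0]
    rw [map_add, Polynomial.aeval_C, map_mul, Polynomial.aeval_X]
  -- multiply by y on the left
  have hy : ty K * Polynomial.aeval (tx K) q
      = q.coeff 0 • ty K + Polynomial.aeval (tx K) q.divX
        - e K * Polynomial.aeval (tx K) q.divX := by
    rw [haq2, mul_add]
    have e1 : ty K * algebraMap K (Toeplitz K) (q.coeff 0) = q.coeff 0 • ty K := by
      rw [Algebra.smul_def]
      exact (Algebra.commutes _ _).symm
    have e2 : ty K * (tx K * Polynomial.aeval (tx K) q.divX)
        = Polynomial.aeval (tx K) q.divX - e K * Polynomial.aeval (tx K) q.divX := by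
      rw [← mul_assoc, yx_eq, sub_mul, one_mul]
    rw [e1, e2]
    abel
  have hyq : ty K * Polynomial.aeval (tx K) q ∈ Lmod K p :=
    Submodule.smul_mem _ (ty K) haq
  have hcy : q.coeff 0 • ty K ∈ Winf K p := by
    have h6 : q.coeff 0 • ty K
        = ty K * Polynomial.aeval (tx K) q - Polynomial.aeval (tx K) q.divX
          + e K * Polynomial.aeval (tx K) q.divX := by
      rw [hy]; abel
    rw [h6]
    refine Submodule.add_mem _ (Submodule.sub_mem _ ?_ ?_) ?_
    · exact L_mem_Winf K hyq
    · exact Submodule.mem_sup_right (aeval_mem_span_xpow K _)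
    · exact L_mem_Winf K (e_aeval_mem K hp _)
  have h7 := Submodule.smul_mem (Winf K p) (q.coeff 0)⁻¹ hcy
  rwa [inv_smul_smul₀ hc] at h7

lemma mul_y_Winf (hp : p ≠ 0) {u : Toeplitz K} (hu : u ∈ Winf K p) :
    ty K * u ∈ Winf K p := by
  obtain ⟨l, hl, v, hv, rfl⟩ := Submodule.mem_sup.mp hu
  rw [mul_add]
  refine Submodule.add_mem _ (L_mem_Winf K (Submodule.smul_mem _ (ty K) hl)) ?_
  refine Submodule.span_induction ?_ ?_ ?_ ?_ hv
  · rintro _ ⟨b, rfl⟩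
    show ty K * tx K ^ b ∈ Winf K p
    cases b with
    | zero =>
        rw [pow_zero, mul_one]
        exact y_mem_Winf K hp
    | succ b =>
        rw [pow_succ', ← mul_assoc, yx_eq, sub_mul, one_mul]
        exact Submodule.sub_mem _ (xpow_mem_Winf K b)
          (L_mem_Winf K (exj_mem K hp b))
  · rw [mul_zero]; exact Submodule.zero_mem _
  · intro a b _ _ ha hb
    rw [mul_add]; exact Submodule.add_mem _ ha hb
  · intro c a _ ha
    rw [mul_smul_comm]; exact Submodule.smul_mem _ _ ha

lemma all_mem_Winf (hp : p ≠ 0) (r : Toeplitz K) : r ∈ Winf K p := by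
  refine Submodule.span_induction ?_ ?_ ?_ ?_ (mem_A K r)
  · rintro _ ⟨⟨a, b⟩, rfl⟩
    show ty K ^ a * tx K ^ b ∈ Winf K p
    induction a with
    | zero => rw [pow_zero, one_mul]; exact xpow_mem_Winf K b
    | succ a ih =>
        rw [pow_succ', mul_assoc]
        exact mul_y_Winf K hp ih
  · exact Submodule.zero_mem _
  · intro a b _ _ ha hb; exact Submodule.add_mem _ ha hb
  · intro c a _ ha; exact Submodule.smul_mem _ _ ha

variable (p) in
def Wfin : Submodule K (Toeplitz K) :=
  (Lmod K p).restrictScalars K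
    ⊔ Submodule.span K ((fun b => tx K ^ b) '' Set.Iio p.natDegree)

lemma xpow_mem_Wfin (hp : p ≠ 0) (b : ℕ) : tx K ^ b ∈ Wfin K p := by
  induction b using Nat.strong_induction_on with
  | _ b ih =>
    rcases lt_or_ge b p.natDegree with hb | hb
    · exact Submodule.mem_sup_right (Submodule.subset_span ⟨b, hb, rfl⟩)
    · set d := p.natDegree with hd
      have key : (tx K ^ (b - d)) • (Polynomial.aeval (tx K) p) ∈ Lmod K p :=
        Submodule.smul_mem _ _
          (Submodule.mem_sup_left (Submodule.mem_span_singleton_self _))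
      rw [smul_eq_mul, Polynomial.aeval_eq_sum_range, Finset.mul_sum] at key
      have hterm : ∀ i, tx K ^ (b - d) * (p.coeff i • tx K ^ i)
          = p.coeff i • tx K ^ (b - d + i) := by
        intro i; rw [mul_smul_comm, ← pow_add]
      simp only [hterm] at key
      rw [Finset.sum_range_succ, Nat.sub_add_cancel hb] at key
      have hkeyW : (∑ i ∈ Finset.range d, p.coeff i • tx K ^ (b - d + i))
          + p.coeff d • tx K ^ b ∈ Wfin K p := Submodule.mem_sup_left key
      have hsum : ∑ i ∈ Finset.range d, p.coeff i • tx K ^ (b - d + i) ∈ Wfin K p :=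
        Submodule.sum_mem _ fun i hi => Submodule.smul_mem _ _
          (ih _ (by
            have : i < d := Finset.mem_range.mp hi
            omega))
      have h2 : p.coeff d • tx K ^ b ∈ Wfin K p := by
        have h3 := Submodule.sub_mem _ hkeyW hsum
        rwa [add_sub_cancel_left] at h3
      have hc : p.coeff d ≠ 0 := by
        rw [hd, ← Polynomial.leadingCoeff]
        exact Polynomial.leadingCoeff_ne_zero.mpr hp
      have h4 := Submodule.smul_mem (Wfin K p) (p.coeff d)⁻¹ h2
      rwa [inv_smul_smul₀ hc] at h4

lemma all_mem_Wfin (hp : p ≠ 0) (r : Toeplitz K) : r ∈ Wfin K p := by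
  have h := all_mem_Winf K hp r
  refine (sup_le le_sup_left (Submodule.span_le.mpr ?_) : Winf K p ≤ Wfin K p) h
  rintro _ ⟨b, rfl⟩
  exact xpow_mem_Wfin K hp b

lemma finite_quot (hp : p ≠ 0) : Module.Finite K (Toeplitz K ⧸ Lmod K p) := by
  refine ⟨Submodule.fg_def.mpr
    ⟨(fun b => Submodule.Quotient.mk (tx K ^ b) : ℕ → Toeplitz K ⧸ Lmod K p)
        '' Set.Iio p.natDegree,
      (Set.finite_Iio _).image _, ?_⟩⟩
  rw [eq_top_iff]
  rintro z -
  obtain ⟨r, rfl⟩ := Submodule.Quotient.mk_surjective _ z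
  obtain ⟨l, hl, v, hv, rfl⟩ := Submodule.mem_sup.mp (all_mem_Wfin K hp r)
  have hl' : l ∈ Lmod K p := hl
  rw [Submodule.Quotient.mk_add,
    (Submodule.Quotient.mk_eq_zero (Lmod K p)).mpr hl', zero_add]
  refine Submodule.span_induction ?_ ?_ ?_ ?_ hv
  · rintro _ ⟨b, hb, rfl⟩
    exact Submodule.subset_span ⟨b, hb, rfl⟩
  · rw [Submodule.Quotient.mk_zero]; exact Submodule.zero_mem _
  · intro a b _ _ ha hb
    rw [Submodule.Quotient.mk_add]; exact Submodule.add_mem _ ha hb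
  · intro c a _ ha
    rw [Submodule.Quotient.mk_smul]; exact Submodule.smul_mem _ _ ha


variable (p) in
def Phij (j : ℕ) : (Toeplitz K ⧸ Vx K) →ₗ[Toeplitz K] (Toeplitz K ⧸ Pmod K p) :=
  Submodule.liftQ (Vx K)
    ((Pmod K p).mkQ ∘ₗ LinearMap.toSpanSingleton (Toeplitz K) (Toeplitz K) (e K * tx K ^ j))
    (by
      rw [Vx, Submodule.span_le, Set.singleton_subset_iff]
      show tx K ∈ LinearMap.ker _
      rw [LinearMap.mem_ker, LinearMap.comp_apply, LinearMap.toSpanSingleton_apply,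
        smul_eq_mul, ← mul_assoc, x_mul_e, zero_mul, map_zero])

lemma Phij_mk (j : ℕ) (r : Toeplitz K) :
    Phij K p j (Submodule.Quotient.mk r)
      = Submodule.Quotient.mk (r * (e K * tx K ^ j)) := by
  rw [Phij, Submodule.liftQ_apply, LinearMap.comp_apply,
    LinearMap.toSpanSingleton_apply, smul_eq_mul, Submodule.mkQ_apply]

variable (p) in
def Phi : (Fin p.natDegree → (Toeplitz K ⧸ Vx K)) →ₗ[Toeplitz K] (Toeplitz K ⧸ Pmod K p) :=
  ∑ j : Fin p.natDegree, (Phij K p j) ∘ₗ LinearMap.proj j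

lemma range_Phi : LinearMap.range (Phi K p) = Submodule.map (Pmod K p).mkQ (Emod K p) := by
  apply le_antisymm
  · rintro _ ⟨w, rfl⟩
    rw [Phi, LinearMap.sum_apply]
    refine Submodule.sum_mem _ fun j _ => ?_
    rw [LinearMap.comp_apply, LinearMap.proj_apply]
    obtain ⟨r, hr⟩ := Submodule.Quotient.mk_surjective _ (w j)
    rw [← hr, Phij_mk]
    rw [show r * (e K * tx K ^ (j : ℕ)) = r • (e K * tx K ^ (j : ℕ)) from rfl]
    exact Submodule.mem_map_of_mem ((Emod K p).smul_mem r
      (Submodule.subset_span ⟨(j : ℕ), j.isLt, rfl⟩))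
  · rw [Emod, Submodule.map_span, Submodule.span_le]
    rintro _ ⟨_, ⟨j, hj, rfl⟩, rfl⟩
    refine ⟨Pi.single ⟨j, hj⟩ (Submodule.Quotient.mk 1), ?_⟩
    rw [Phi, LinearMap.sum_apply]
    rw [Finset.sum_eq_single (⟨j, hj⟩ : Fin p.natDegree)]
    · rw [LinearMap.comp_apply, LinearMap.proj_apply, Pi.single_eq_same, Phij_mk, one_mul]
      rfl
    · intro i _ hne
      rw [LinearMap.comp_apply, LinearMap.proj_apply, Pi.single_eq_of_ne hne, map_zero]
    · intro h
      exact absurd (Finset.mem_univ _) h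

lemma noeth_art_quotP (hp : p ≠ 0) :
    IsNoetherian (Toeplitz K) (Toeplitz K ⧸ Pmod K p)
      ∧ IsArtinian (Toeplitz K) (Toeplitz K ⧸ Pmod K p) := by
  haveI hs : IsSimpleModule (Toeplitz K) (Toeplitz K ⧸ Vx K) := simpleVx K
  have hfl : IsFiniteLength (Toeplitz K) (Toeplitz K ⧸ Vx K) := by
    haveI : IsSimpleModule (Toeplitz K)
        ((Toeplitz K ⧸ Vx K) ⧸ (⊥ : Submodule (Toeplitz K) (Toeplitz K ⧸ Vx K))) :=
      IsSimpleModule.congr (Submodule.quotEquivOfEqBot (⊥ : Submodule (Toeplitz K) (Toeplitz K ⧸ Vx K)) rfl)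
    exact .of_simple_quotient
      (N := (⊥ : Submodule (Toeplitz K) (Toeplitz K ⧸ Vx K))) .of_subsingleton
  obtain ⟨hVn, hVa⟩ := isFiniteLength_iff_isNoetherian_isArtinian.mp hfl
  haveI := hVn
  haveI := hVa
  haveI hLn : IsNoetherian (Toeplitz K) ↥(Submodule.map (Pmod K p).mkQ (Emod K p)) := by
    rw [← range_Phi]
    exact isNoetherian_of_surjective (Phi K p).rangeRestrict
      (LinearMap.range_rangeRestrict _)
  haveI hLa : IsArtinian (Toeplitz K) ↥(Submodule.map (Pmod K p).mkQ (Emod K p)) := by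
    rw [← range_Phi]
    exact isArtinian_of_surjective _ (Phi K p).rangeRestrict
      (LinearMap.surjective_rangeRestrict _)
  have hqK : IsNoetherian K (Toeplitz K ⧸ Lmod K p) := by
    haveI := finite_quot K hp
    exact IsNoetherian.iff_fg.mpr inferInstance
  have haK : IsArtinian K (Toeplitz K ⧸ Lmod K p) := by
    haveI := finite_quot K hp
    exact isArtinian_of_fg_of_artinian'
  haveI hQn : IsNoetherian (Toeplitz K) (Toeplitz K ⧸ Lmod K p) :=
    isNoetherian_of_tower K hqK
  haveI hQa : IsArtinian (Toeplitz K) (Toeplitz K ⧸ Lmod K p) :=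
    isArtinian_of_tower K haK
  let eq3 : ((Toeplitz K ⧸ Pmod K p) ⧸ Submodule.map (Pmod K p).mkQ (Emod K p))
      ≃ₗ[Toeplitz K] Toeplitz K ⧸ Lmod K p :=
    Submodule.quotientQuotientEquivQuotientSup (Pmod K p) (Emod K p)
  haveI : IsNoetherian (Toeplitz K)
      ((Toeplitz K ⧸ Pmod K p) ⧸ Submodule.map (Pmod K p).mkQ (Emod K p)) :=
    isNoetherian_of_linearEquiv eq3.symm
  haveI : IsArtinian (Toeplitz K)
      ((Toeplitz K ⧸ Pmod K p) ⧸ Submodule.map (Pmod K p).mkQ (Emod K p)) :=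
    isArtinian_of_linearEquiv eq3.symm
  constructor
  · exact isNoetherian_of_range_eq_ker
      (Submodule.map (Pmod K p).mkQ (Emod K p)).subtype
      (Submodule.map (Pmod K p).mkQ (Emod K p)).mkQ
      (by rw [Submodule.range_subtype, Submodule.ker_mkQ])
  · exact isArtinian_of_range_eq_ker
      (Submodule.map (Pmod K p).mkQ (Emod K p)).subtype
      (Submodule.map (Pmod K p).mkQ (Emod K p)).mkQ
      (by rw [Submodule.range_subtype, Submodule.ker_mkQ])

end Main

end TP

/-- If `H = Σ ⊕ Rp(x)` is a left ideal of `R` with `p(x) ≠ 0` and `Σ ⊆ I` semisimple,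
then `H` is finitely generated and `Σ` has finite length. -/
theorem toeplitz_left_ideal_fg (p : Polynomial K) (hp : p ≠ 0)
    (S : Submodule (Toeplitz K) (Toeplitz K))
    (hSI : S ≤ TwoSidedIdeal.asIdeal (TwoSidedIdeal.span {1 - ty K * tx K}))
    (hSsemi : IsSemisimpleModule (Toeplitz K) S)
    (hdisj : Disjoint S (Submodule.span (Toeplitz K) {Polynomial.aeval (tx K) p})) :
    (S ⊔ Submodule.span (Toeplitz K) {Polynomial.aeval (tx K) p}).FG ∧
    IsFiniteLength (Toeplitz K) S := by
  obtain ⟨hN, hA⟩ := TP.noeth_art_quotP K (p := p) hp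
  haveI := hN
  haveI := hA
  let f : ↥S →ₗ[Toeplitz K] Toeplitz K ⧸ TP.Pmod K p := (TP.Pmod K p).mkQ ∘ₗ S.subtype
  have hf : Function.Injective f := by
    intro a b hab
    have h1 : (Submodule.Quotient.mk (a : Toeplitz K) : Toeplitz K ⧸ TP.Pmod K p)
        = Submodule.Quotient.mk (b : Toeplitz K) := hab
    have h2 : (a : Toeplitz K) - b ∈ TP.Pmod K p := (Submodule.Quotient.eq _).mp h1
    have h3 : (a : Toeplitz K) - b ∈ S := sub_mem a.2 b.2
    have h4 := hdisj.le_bot ⟨h3, h2⟩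
    rw [Submodule.mem_bot, sub_eq_zero] at h4
    exact Subtype.ext h4
  haveI hSn : IsNoetherian (Toeplitz K) ↥S := isNoetherian_of_injective f hf
  haveI hSa : IsArtinian (Toeplitz K) ↥S := isArtinian_of_injective f hf
  refine ⟨Submodule.FG.sup ?_ (Submodule.fg_span_singleton _), ?_⟩
  · exact (Submodule.fg_top S).mp (IsNoetherian.noetherian ⊤)
  · exact isFiniteLength_iff_isNoetherian_isArtinian.mpr ⟨hSn, hSa⟩
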